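/- For β in (0,1), lim_{x→β} ∫₀ˣ log2((1-t)/(1-t/x)) dt = (β-1)·log2(1-β). Equivalently, ∫₀^β log2((1-t)/(1-t/β)) dt = (β-1)·log2(1-β) = H(β) + β·log2(β), where H is the binary entropy function. -/

import Mathlib

open Real MeasureTheory Filter

noncomputable def binEnt (p : ℝ) : ℝ :=
  -(p * Real.logb 2 p) - (1 - p) * Real.logb 2 (1 - p)

lemma intIntLog01 : IntervalIntegrable Real.log volume 0 1 := by
  have hg : IntervalIntegrable (fun u : ℝ => 2 * u ^ (-(1/2) : ℝ)) volume 0 1 :=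
    (intervalIntegral.intervalIntegrable_rpow' (by norm_num)).const_mul 2
  refine hg.mono_fun' Real.measurable_log.aestronglyMeasurable ?_
  rw [Set.uIoc_of_le (by norm_num : (0:ℝ) ≤ 1)]
  filter_upwards [MeasureTheory.ae_restrict_mem measurableSet_Ioc] with u hu
  have h0 : 0 < u := hu.1
  have hlog : Real.log u ≤ 0 := Real.log_nonpos h0.le hu.2
  have hw : 0 < u ^ (-(1/2):ℝ) := Real.rpow_pos_of_pos h0 _
  have hlw : Real.log (u ^ (-(1/2):ℝ)) = -(1/2) * Real.log u := Real.log_rpow h0 _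
  have hle := Real.log_le_sub_one_of_pos hw
  simp only [Real.norm_eq_abs, abs_of_nonpos hlog]
  nlinarith

lemma intLog01 : (∫ u in (0:ℝ)..1, Real.log u) = -1 := by
  have hcont : ContinuousOn (fun a => ∫ u in a..(1:ℝ), Real.log u) (Set.uIcc (0:ℝ) 1) := by
    apply intervalIntegral.continuousOn_primitive_interval_left
    rw [Set.uIcc_of_le (by norm_num : (0:ℝ) ≤ 1),
      integrableOn_Icc_iff_integrableOn_Ioc]
    exact (intervalIntegrable_iff_integrableOn_Ioc_of_le (by norm_num)).1 intIntLog01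
  have key : Tendsto (fun a => ∫ u in a..(1:ℝ), Real.log u) (nhdsWithin 0 (Set.Ioc (0:ℝ) 1))
      (nhds (∫ u in (0:ℝ)..1, Real.log u)) :=
    ((hcont 0 Set.left_mem_uIcc).tendsto).mono_left (nhdsWithin_mono _ (by
      rw [Set.uIcc_of_le (by norm_num : (0:ℝ) ≤ 1)]; exact Set.Ioc_subset_Icc_self))
  have hg : Tendsto (fun a : ℝ => -1 + a - a * Real.log a) (nhdsWithin 0 (Set.Ioc (0:ℝ) 1))
      (nhds (-1)) := by
    have hc : ContinuousAt (fun a : ℝ => -1 + a - a * Real.log a) 0 :=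
      (continuousAt_const.add continuousAt_id).sub Real.continuous_mul_log.continuousAt
    have := hc.tendsto.mono_left (nhdsWithin_le_nhds (s := Set.Ioc (0:ℝ) 1))
    simpa using this
  have key2 : Tendsto (fun a => ∫ u in a..(1:ℝ), Real.log u) (nhdsWithin 0 (Set.Ioc (0:ℝ) 1))
      (nhds (-1)) := by
    refine hg.congr' ?_
    filter_upwards [self_mem_nhdsWithin] with a ha
    rw [integral_log]
    simp [Real.log_one]; ring
  haveI : (nhdsWithin (0:ℝ) (Set.Ioc (0:ℝ) 1)).NeBot := by
    rw [nhdsWithin_Ioc_eq_nhdsGT one_pos]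
    infer_instance
  exact tendsto_nhds_unique key key2

lemma intIntLogOneSub01 : IntervalIntegrable (fun u : ℝ => Real.log (1 - u)) volume 0 1 := by
  simpa using (intIntLog01.comp_sub_left 1).symm

lemma intLogOneSub01 : (∫ u in (0:ℝ)..1, Real.log (1 - u)) = -1 := by
  rw [intervalIntegral.integral_comp_sub_left (fun u => Real.log u) 1]
  simpa using intLog01

lemma key_integral (x : ℝ) (hx : x ∈ Set.Ioo (0:ℝ) 1) :
    (∫ t in (0:ℝ)..x, Real.logb 2 ((1 - t) / (1 - t / x)))
      = (x - 1) * Real.logb 2 (1 - x) := by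
  obtain ⟨hx0, hx1⟩ := hx
  have hxne : x ≠ 0 := ne_of_gt hx0
  -- integrability of the two pieces
  have h1 : IntervalIntegrable (fun t : ℝ => Real.log (1 - t)) volume 0 x := by
    apply ContinuousOn.intervalIntegrable
    apply ContinuousOn.log (by fun_prop)
    intro t ht
    rw [Set.uIcc_of_le hx0.le] at ht
    have : t < 1 := lt_of_le_of_lt ht.2 hx1
    intro h; linarith [h]
  have h2 : IntervalIntegrable (fun t : ℝ => Real.log (1 - t / x)) volume 0 x := by
    have h := intIntLogOneSub01.comp_mul_left (c := x⁻¹)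
    rw [zero_div, one_div, inv_inv] at h
    simpa [div_eq_inv_mul] using h
  -- rewrite the integrand a.e.
  have hae : (∫ t in (0:ℝ)..x, Real.logb 2 ((1 - t) / (1 - t / x)))
      = ∫ t in (0:ℝ)..x, (Real.log (1 - t) - Real.log (1 - t / x)) / Real.log 2 := by
    apply intervalIntegral.integral_congr_ae
    have hne : ∀ᵐ t : ℝ, t ∉ ({x} : Set ℝ) := (Set.countable_singleton x).ae_notMem volume
    filter_upwards [hne] with t htne htmem
    rw [Set.uIoc_of_le hx0.le] at htmem
    have htx : t < x := lt_of_le_of_ne htmem.2 (by simpa using htne)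
    have h1t : (0:ℝ) < 1 - t := by
      have : t < 1 := lt_trans htx hx1
      linarith
    have h2t : (0:ℝ) < 1 - t / x := by
      have : t / x < 1 := (div_lt_one hx0).2 htx
      linarith
    rw [Real.logb, Real.log_div (ne_of_gt h1t) (ne_of_gt h2t)]
  rw [hae, intervalIntegral.integral_div, intervalIntegral.integral_sub h1 h2]
  -- compute the first integral
  have e1 : (∫ t in (0:ℝ)..x, Real.log (1 - t)) = -(1 - x) * Real.log (1 - x) - x := by
    rw [intervalIntegral.integral_comp_sub_left (fun u => Real.log u) 1, sub_zero,
      integral_log]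
    simp [Real.log_one]; ring
  -- compute the second integral
  have e2 : (∫ t in (0:ℝ)..x, Real.log (1 - t / x)) = -x := by
    rw [intervalIntegral.integral_comp_div (f := fun u => Real.log (1 - u)) hxne]
    rw [zero_div, div_self hxne, intLogOneSub01]
    simp
  rw [e1, e2, Real.logb]
  ring

theorem deviation_iid_example (β : ℝ) (hβ : β ∈ Set.Ioo (0:ℝ) 1) :
    Tendsto (fun x : ℝ => ∫ t in (0:ℝ)..x, Real.logb 2 ((1 - t) / (1 - t / x)))
        (nhds β) (nhds ((β - 1) * Real.logb 2 (1 - β)))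
    ∧ (∫ t in (0:ℝ)..β, Real.logb 2 ((1 - t) / (1 - t / β)))
        = (β - 1) * Real.logb 2 (1 - β)
    ∧ (β - 1) * Real.logb 2 (1 - β) = binEnt β + β * Real.logb 2 β := by
  obtain ⟨hβ0, hβ1⟩ := hβ
  refine ⟨?_, key_integral β ⟨hβ0, hβ1⟩, ?_⟩
  · have hlim : Tendsto (fun x : ℝ => (x - 1) * Real.logb 2 (1 - x)) (nhds β)
        (nhds ((β - 1) * Real.logb 2 (1 - β))) := by
      apply ContinuousAt.tendsto
      apply ContinuousAt.mul
      · fun_prop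
      · exact (Real.continuousAt_logb (by linarith : (1:ℝ) - β ≠ 0)).comp
          (by fun_prop : ContinuousAt (fun x : ℝ => 1 - x) β)
    refine hlim.congr' ?_
    have hmem : Set.Ioo (0:ℝ) 1 ∈ nhds β := isOpen_Ioo.mem_nhds ⟨hβ0, hβ1⟩
    filter_upwards [hmem] with x hx
    exact (key_integral x hx).symm
  · unfold binEnt
    ring
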